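/- For every natural number n ≥ 1: (1) every ultrametric space consisting of exactly n+1 points admits an isometric embedding into the n-dimensional Euclidean space ℝⁿ; and (2) there exists an ultrametric space consisting of n+1 points that admits no isometric embedding into ℝᵏ for any k < n. -/

import Mathlib

open Finset Matrix

lemma ultra_negType {X : Type} [MetricSpace X]
    (hu : ∀ x y z : X, dist x z ≤ max (dist x y) (dist y z)) :
    ∀ (n : ℕ) (s : Finset X), s.card ≤ n → ∀ (D : ℝ), 0 ≤ D →
      (∀ x ∈ s, ∀ y ∈ s, dist x y ≤ D) → ∀ v : X → ℝ,
      (∑ x ∈ s, ∑ y ∈ s, dist x y ^ 2 * v x * v y) ≤ D ^ 2 * (∑ x ∈ s, v x) ^ 2 := by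
  intro n
  induction n with
  | zero =>
    intro s hs D hD hbound v
    rw [Finset.card_eq_zero.mp (Nat.le_zero.mp hs)]
    simp
  | succ n ih =>
    intro s hs D hD hbound v
    classical
    by_cases hcard : s.card ≤ 1
    · have h0 : ∀ x ∈ s, ∀ y ∈ s, dist x y = 0 := by
        intro x hx y hy
        rw [Finset.card_le_one] at hcard
        rw [hcard x hx y hy, dist_self]
      calc (∑ x ∈ s, ∑ y ∈ s, dist x y ^ 2 * v x * v y)
          = ∑ x ∈ s, ∑ y ∈ s, (0:ℝ) := by
            refine Finset.sum_congr rfl fun x hx => Finset.sum_congr rfl fun y hy => ?_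
            rw [h0 x hx y hy]; ring
        _ ≤ D ^ 2 * (∑ x ∈ s, v x) ^ 2 := by simp; positivity
    · push_neg at hcard
      have hne : s.Nonempty := Finset.card_pos.mp (by omega)
      have hne2 : (s ×ˢ s).Nonempty := hne.product hne
      set d₀ : ℝ := (s ×ˢ s).sup' hne2 (fun p => dist p.1 p.2) with hd₀
      have hle : ∀ x ∈ s, ∀ y ∈ s, dist x y ≤ d₀ := fun x hx y hy =>
        Finset.le_sup' (f := fun p : X × X => dist p.1 p.2) (Finset.mk_mem_product hx hy)
      have hd₀D : d₀ ≤ D := Finset.sup'_le _ _ fun p hp => by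
        rw [Finset.mem_product] at hp; exact hbound _ hp.1 _ hp.2
      obtain ⟨a, ha, b, hb, hab⟩ := Finset.one_lt_card.mp hcard
      have hd₀pos : 0 < d₀ := lt_of_lt_of_le (dist_pos.mpr hab) (hle a ha b hb)
      obtain ⟨p, hp, hpeq⟩ := Finset.exists_mem_eq_sup' hne2 (fun p : X × X => dist p.1 p.2)
      rw [Finset.mem_product] at hp
      set t₁ := s.filter (fun x => dist a x < d₀) with ht₁
      set t₂ := s.filter (fun x => ¬ dist a x < d₀) with ht₂
      have hunion : t₁ ∪ t₂ = s := Finset.filter_union_filter_not_eq _ s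
      have hdisj : Disjoint t₁ t₂ := Finset.disjoint_filter_filter_not s s _
      have hat₁ : a ∈ t₁ := Finset.mem_filter.mpr ⟨ha, by simpa using hd₀pos⟩
      have ht₂ne : t₂.Nonempty := by
        have h1 : d₀ ≤ max (dist a p.1) (dist a p.2) := by
          calc d₀ = dist p.1 p.2 := hpeq
            _ ≤ max (dist p.1 a) (dist a p.2) := hu _ _ _
            _ = max (dist a p.1) (dist a p.2) := by rw [dist_comm p.1 a]
        rcases le_max_iff.mp h1 with h2 | h2
        · exact ⟨p.1, Finset.mem_filter.mpr ⟨hp.1, not_lt.mpr h2⟩⟩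
        · exact ⟨p.2, Finset.mem_filter.mpr ⟨hp.2, not_lt.mpr h2⟩⟩
      -- distances between the two parts are exactly d₀
      have hcross : ∀ x ∈ t₁, ∀ y ∈ t₂, dist x y = d₀ := by
        intro x hx y hy
        obtain ⟨hxs, hxlt⟩ := Finset.mem_filter.mp hx
        obtain ⟨hys, hyge⟩ := Finset.mem_filter.mp hy
        have hay : dist a y = d₀ := le_antisymm (hle a ha y hys) (not_lt.mp hyge)
        have hub : dist x y ≤ d₀ := hle x hxs y hys
        have hlb : d₀ ≤ dist x y := by
          have := hu a x y
          rw [hay] at this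
          rcases le_max_iff.mp this with h | h
          · exact absurd h (not_le.mpr hxlt)
          · exact h
        exact le_antisymm hub hlb
      -- cardinalities
      have hcards : t₁.card + t₂.card = s.card := by
        rw [← Finset.card_union_of_disjoint hdisj, hunion]
      have hc₁ : t₁.card ≤ n := by
        have := Finset.card_pos.mpr ht₂ne; omega
      have hc₂ : t₂.card ≤ n := by
        have := Finset.card_pos.mpr ⟨a, hat₁⟩; omega
      have hb₁ : ∀ x ∈ t₁, ∀ y ∈ t₁, dist x y ≤ d₀ := fun x hx y hy =>
        hle x (Finset.filter_subset _ s hx) y (Finset.filter_subset _ s hy)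
      have hb₂ : ∀ x ∈ t₂, ∀ y ∈ t₂, dist x y ≤ d₀ := fun x hx y hy =>
        hle x (Finset.filter_subset _ s hx) y (Finset.filter_subset _ s hy)
      have ih₁ := ih t₁ hc₁ d₀ hd₀pos.le hb₁ v
      have ih₂ := ih t₂ hc₂ d₀ hd₀pos.le hb₂ v
      set S₁ := ∑ x ∈ t₁, v x with hS₁
      set S₂ := ∑ x ∈ t₂, v x with hS₂
      -- split the double sum
      have hsplit : (∑ x ∈ s, ∑ y ∈ s, dist x y ^ 2 * v x * v y)
          = (∑ x ∈ t₁, ∑ y ∈ t₁, dist x y ^ 2 * v x * v y)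
            + (∑ x ∈ t₂, ∑ y ∈ t₂, dist x y ^ 2 * v x * v y)
            + 2 * (d₀ ^ 2 * (S₁ * S₂)) := by
        have hinner : ∀ x : X, (∑ y ∈ s, dist x y ^ 2 * v x * v y)
            = (∑ y ∈ t₁, dist x y ^ 2 * v x * v y) + (∑ y ∈ t₂, dist x y ^ 2 * v x * v y) := by
          intro x; rw [← hunion, Finset.sum_union hdisj]
        calc (∑ x ∈ s, ∑ y ∈ s, dist x y ^ 2 * v x * v y)
            = ∑ x ∈ t₁, ∑ y ∈ s, dist x y ^ 2 * v x * v y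
              + ∑ x ∈ t₂, ∑ y ∈ s, dist x y ^ 2 * v x * v y := by
              rw [← hunion, Finset.sum_union hdisj]
          _ = ((∑ x ∈ t₁, ∑ y ∈ t₁, dist x y ^ 2 * v x * v y)
                + ∑ x ∈ t₁, ∑ y ∈ t₂, dist x y ^ 2 * v x * v y)
              + ((∑ x ∈ t₂, ∑ y ∈ t₁, dist x y ^ 2 * v x * v y)
                + ∑ x ∈ t₂, ∑ y ∈ t₂, dist x y ^ 2 * v x * v y) := by
              simp only [hinner, Finset.sum_add_distrib]
          _ = _ := by
              have pull : ∀ (u w : Finset X), (∑ x ∈ u, ∑ y ∈ w, d₀ ^ 2 * v x * v y)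
                  = d₀ ^ 2 * ((∑ x ∈ u, v x) * (∑ y ∈ w, v y)) := by
                intro u w
                have inner : ∀ x : X, (∑ y ∈ w, d₀ ^ 2 * v x * v y)
                    = d₀ ^ 2 * v x * ∑ y ∈ w, v y := fun x => (Finset.mul_sum _ _ _).symm
                calc (∑ x ∈ u, ∑ y ∈ w, d₀ ^ 2 * v x * v y)
                    = ∑ x ∈ u, d₀ ^ 2 * v x * ∑ y ∈ w, v y := Finset.sum_congr rfl fun x _ => inner x
                  _ = (∑ x ∈ u, v x) * (d₀ ^ 2 * ∑ y ∈ w, v y) := by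
                      rw [Finset.sum_mul]
                      exact Finset.sum_congr rfl fun x _ => by ring
                  _ = d₀ ^ 2 * ((∑ x ∈ u, v x) * (∑ y ∈ w, v y)) := by ring
              have e1 : (∑ x ∈ t₁, ∑ y ∈ t₂, dist x y ^ 2 * v x * v y) = d₀ ^ 2 * (S₁ * S₂) := by
                rw [← pull t₁ t₂]
                refine Finset.sum_congr rfl fun x hx => Finset.sum_congr rfl fun y hy => ?_
                rw [hcross x hx y hy]
              have e2 : (∑ x ∈ t₂, ∑ y ∈ t₁, dist x y ^ 2 * v x * v y) = d₀ ^ 2 * (S₂ * S₁) := by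
                rw [← pull t₂ t₁]
                refine Finset.sum_congr rfl fun x hx => Finset.sum_congr rfl fun y hy => ?_
                rw [dist_comm, hcross y hy x hx]
              rw [e1, e2]; ring
      have hsum : (∑ x ∈ s, v x) = S₁ + S₂ := by rw [← hunion, Finset.sum_union hdisj]
      rw [hsplit, hsum]
      have key : (∑ x ∈ t₁, ∑ y ∈ t₁, dist x y ^ 2 * v x * v y)
            + (∑ x ∈ t₂, ∑ y ∈ t₂, dist x y ^ 2 * v x * v y)
            + 2 * (d₀ ^ 2 * (S₁ * S₂)) ≤ d₀ ^ 2 * (S₁ + S₂) ^ 2 := by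
        nlinarith [ih₁, ih₂]
      refine key.trans ?_
      have : d₀ ^ 2 ≤ D ^ 2 := by nlinarith
      nlinarith [sq_nonneg (S₁ + S₂)]

lemma ultra_negType_zero {X : Type} [MetricSpace X] [Fintype X]
    (hu : ∀ x y z : X, dist x z ≤ max (dist x y) (dist y z))
    (w : X → ℝ) (hw : ∑ x, w x = 0) :
    (∑ x : X, ∑ y : X, dist x y ^ 2 * w x * w y) ≤ 0 := by
  rcases isEmpty_or_nonempty X with hX | hX
  · simp
  · obtain ⟨x₁⟩ := hX
    have hne2 : ((Finset.univ : Finset X) ×ˢ Finset.univ).Nonempty :=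
      ⟨(x₁, x₁), Finset.mk_mem_product (Finset.mem_univ _) (Finset.mem_univ _)⟩
    set D : ℝ := ((Finset.univ : Finset X) ×ˢ Finset.univ).sup' hne2 (fun p => dist p.1 p.2)
      with hD
    have hD0 : 0 ≤ D := by
      have : dist x₁ x₁ ≤ D :=
        Finset.le_sup' (f := fun p : X × X => dist p.1 p.2)
          (Finset.mk_mem_product (Finset.mem_univ x₁) (Finset.mem_univ x₁))
      simpa using this
    have hb : ∀ x ∈ (Finset.univ : Finset X), ∀ y ∈ (Finset.univ : Finset X), dist x y ≤ D :=
      fun x _ y _ => Finset.le_sup' (f := fun p : X × X => dist p.1 p.2)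
        (Finset.mk_mem_product (Finset.mem_univ x) (Finset.mem_univ y))
    have := ultra_negType hu (Fintype.card X) Finset.univ (le_of_eq (Finset.card_univ)) D hD0 hb w
    rw [hw] at this
    simpa using this

lemma part1 (n : ℕ) (X : Type) [MetricSpace X]
    (hu : ∀ x y z : X, dist x z ≤ max (dist x y) (dist y z))
    (hcard : Nat.card X = n + 1) :
    ∃ f : X → EuclideanSpace ℝ (Fin n), ∀ x y : X, ‖f x - f y‖ = dist x y := by
  classical
  have hfin : Finite X := Nat.finite_of_card_ne_zero (by omega)
  have : Fintype X := Fintype.ofFinite X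
  have hcard' : Fintype.card X = n + 1 := by
    rw [← Nat.card_eq_fintype_card]; exact hcard
  have hXne : Nonempty X := Fintype.card_pos_iff.mp (by omega)
  obtain ⟨x₀⟩ := hXne
  have hsub : Fintype.card {x : X // x ≠ x₀} = n := by
    have h1 : Fintype.card {x : X // x = x₀} = 1 := Fintype.card_subtype_eq x₀
    have h2 := Fintype.card_subtype_compl (fun x : X => x = x₀)
    rw [h1, hcard'] at h2
    simpa using h2
  let e : {x : X // x ≠ x₀} ≃ Fin n := Fintype.equivFinOfCardEq hsub
  set g : Fin n → X := fun i => (e.symm i).1 with hg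
  have hginj : Function.Injective g := by
    intro i j hij
    have : e.symm i = e.symm j := Subtype.ext hij
    exact e.symm.injective this
  have hgne : ∀ i, g i ≠ x₀ := fun i => (e.symm i).2
  have hge : ∀ (x : X) (hx : x ≠ x₀), g (e ⟨x, hx⟩) = x := by
    intro x hx
    show (e.symm (e ⟨x, hx⟩)).1 = x
    rw [e.symm_apply_apply]
  have hdecomp : ∀ F : X → ℝ, (∑ x : X, F x) = F x₀ + ∑ i : Fin n, F (g i) := by
    intro F
    have huniv : (Finset.univ : Finset X) = insert x₀ (Finset.univ.image g) := by
      ext x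
      simp only [Finset.mem_univ, true_iff, Finset.mem_insert]
      by_cases hx : x = x₀
      · exact Or.inl hx
      · exact Or.inr (Finset.mem_image.mpr ⟨e ⟨x, hx⟩, Finset.mem_univ _, hge x hx⟩)
    have hx₀ : x₀ ∉ Finset.univ.image g := by
      intro h
      obtain ⟨i, -, hi⟩ := Finset.mem_image.mp h
      exact hgne i hi
    rw [huniv, Finset.sum_insert hx₀, Finset.sum_image (fun i _ j _ h => hginj h)]
  -- the Gram-type matrix
  set H : Matrix (Fin n) (Fin n) ℝ := fun i j =>
    (dist (g i) x₀ ^ 2 + dist (g j) x₀ ^ 2 - dist (g i) (g j) ^ 2) / 2 with hH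
  have hHsymm : ∀ i j, H i j = H j i := by
    intro i j; simp only [hH]; rw [dist_comm (g i) (g j)]; ring
  have hHdiag : ∀ i, H i i = dist (g i) x₀ ^ 2 := by
    intro i; simp only [hH, dist_self]; ring
  have hPSD : H.PosSemidef := by
    rw [Matrix.posSemidef_iff_dotProduct_mulVec]
    constructor
    · ext i j
      simp only [Matrix.conjTranspose_apply, star_trivial]
      exact hHsymm j i
    · intro v
      rw [star_trivial]
      set S := ∑ i : Fin n, v i with hS
      set w : X → ℝ := fun x => if h : x = x₀ then -S else v (e ⟨x, h⟩) with hwdef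
      have hwx₀ : w x₀ = -S := by simp [hwdef]
      have hwg : ∀ i, w (g i) = v i := by
        intro i
        have h1 : w (g i) = v (e ⟨g i, hgne i⟩) := dif_neg (hgne i)
        rw [h1]
        congr 1
        have h2 : (⟨g i, hgne i⟩ : {x : X // x ≠ x₀}) = e.symm i := Subtype.ext rfl
        rw [h2, e.apply_symm_apply]
      have hw0 : ∑ x : X, w x = 0 := by
        rw [hdecomp w, hwx₀]
        simp only [hwg]
        rw [← hS]; ring
      have hQ := ultra_negType_zero hu w hw0
      set A := ∑ i : Fin n, dist (g i) x₀ ^ 2 * v i with hA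
      set B := ∑ i : Fin n, ∑ j : Fin n, dist (g i) (g j) ^ 2 * v i * v j with hB
      have hrow : ∀ x : X, (∑ y : X, dist x y ^ 2 * w x * w y)
          = dist x x₀ ^ 2 * w x * (-S) + ∑ j : Fin n, dist x (g j) ^ 2 * w x * v j := by
        intro x
        rw [hdecomp (fun y => dist x y ^ 2 * w x * w y)]
        simp only [hwg, hwx₀]
      have hQeq : (∑ x : X, ∑ y : X, dist x y ^ 2 * w x * w y) = B - 2 * S * A := by
        rw [hdecomp (fun x => ∑ y : X, dist x y ^ 2 * w x * w y)]
        have h₀ : (∑ y : X, dist x₀ y ^ 2 * w x₀ * w y) = -(S * A) := by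
          rw [hrow x₀, hwx₀, dist_self]
          have h1 : (∑ j : Fin n, dist x₀ (g j) ^ 2 * (-S) * v j)
              = ∑ j : Fin n, -(S * (dist (g j) x₀ ^ 2 * v j)) :=
            Finset.sum_congr rfl fun j _ => by rw [dist_comm]; ring
          rw [h1, Finset.sum_neg_distrib, ← Finset.mul_sum, ← hA]
          ring
        have h₁ : ∀ i : Fin n, (∑ y : X, dist (g i) y ^ 2 * w (g i) * w y)
            = dist (g i) x₀ ^ 2 * v i * (-S)
              + ∑ j : Fin n, dist (g i) (g j) ^ 2 * v i * v j := by
          intro i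
          rw [hrow (g i), hwg i]
        rw [h₀]
        rw [Finset.sum_congr rfl (fun i _ => h₁ i), Finset.sum_add_distrib]
        have h2 : (∑ i : Fin n, dist (g i) x₀ ^ 2 * v i * (-S))
            = ∑ i : Fin n, -(S * (dist (g i) x₀ ^ 2 * v i)) :=
          Finset.sum_congr rfl fun i _ => by ring
        rw [h2, Finset.sum_neg_distrib, ← Finset.mul_sum, ← hA, ← hB]
        ring
      have hdot : dotProduct v (H *ᵥ v) = (A * S + S * A - B) / 2 := by
        have hmv : ∀ i, (H *ᵥ v) i = ∑ j : Fin n, H i j * v j := fun i => rfl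
        have hdp : dotProduct v (H *ᵥ v) = ∑ i : Fin n, v i * ∑ j : Fin n, H i j * v j := by
          simp only [dotProduct, hmv]
        rw [hdp]
        have hterm : ∀ i, v i * (∑ j : Fin n, H i j * v j)
            = ((dist (g i) x₀ ^ 2 * v i) * S + v i * A
                - ∑ j : Fin n, dist (g i) (g j) ^ 2 * v i * v j) / 2 := by
          intro i
          have h3 : (∑ j : Fin n, v i * (H i j * v j))
              = ∑ j : Fin n, ((dist (g i) x₀ ^ 2 * v i) * v j + v i * (dist (g j) x₀ ^ 2 * v j)
                  - dist (g i) (g j) ^ 2 * v i * v j) / 2 :=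
            Finset.sum_congr rfl fun j _ => by simp only [hH]; ring
          rw [Finset.mul_sum, h3, ← Finset.sum_div]
          congr 1
          rw [Finset.sum_sub_distrib, Finset.sum_add_distrib, ← Finset.mul_sum, ← Finset.mul_sum,
            ← hS, ← hA]
        rw [Finset.sum_congr rfl (fun i _ => hterm i), ← Finset.sum_div]
        congr 1
        rw [Finset.sum_sub_distrib, Finset.sum_add_distrib, ← Finset.sum_mul, ← Finset.sum_mul,
          ← hA, ← hS, ← hB]
      rw [hQeq] at hQ
      rw [hdot]
      linarith
  obtain ⟨M, hM⟩ : ∃ M : Matrix (Fin n) (Fin n) ℝ, H = Mᴴ * M := by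
    open scoped MatrixOrder in
    exact CStarAlgebra.nonneg_iff_eq_star_mul_self.mp hPSD.nonneg
  set F : Fin n → EuclideanSpace ℝ (Fin n) := fun i => WithLp.toLp 2 (fun k => M k i) with hF
  have hFinner : ∀ i j, inner ℝ (F i) (F j) = H i j := by
    intro i j
    rw [PiLp.inner_apply]
    simp only [RCLike.inner_apply, starRingEnd_apply, star_trivial]
    rw [hM, Matrix.mul_apply]
    exact Finset.sum_congr rfl fun k _ => by
      rw [Matrix.conjTranspose_apply, star_trivial]; exact mul_comm _ _
  have hFnormsq : ∀ i, ‖F i‖ ^ 2 = dist (g i) x₀ ^ 2 := by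
    intro i
    rw [← real_inner_self_eq_norm_sq, hFinner, hHdiag]
  have hFdistsq : ∀ i j, ‖F i - F j‖ ^ 2 = dist (g i) (g j) ^ 2 := by
    intro i j
    rw [norm_sub_sq_real, hFinner, hFnormsq, hFnormsq]
    simp only [hH]
    ring
  have hsqr : ∀ (u : EuclideanSpace ℝ (Fin n)) (d : ℝ), 0 ≤ d → ‖u‖ ^ 2 = d ^ 2 → ‖u‖ = d := by
    intro u d hd h
    have := congrArg Real.sqrt h
    rwa [Real.sqrt_sq (norm_nonneg _), Real.sqrt_sq hd] at this
  set f : X → EuclideanSpace ℝ (Fin n) := fun x => if h : x = x₀ then 0 else F (e ⟨x, h⟩)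
    with hfdef
  have hfx₀ : f x₀ = 0 := dif_pos rfl
  have hfne : ∀ (x : X) (hx : x ≠ x₀), f x = F (e ⟨x, hx⟩) := fun x hx => dif_neg hx
  refine ⟨f, ?_⟩
  intro x y
  by_cases hx : x = x₀ <;> by_cases hy : y = x₀
  · subst hx; subst hy; rw [hfx₀]; simp
  · subst hx
    rw [hfx₀, hfne y hy, zero_sub, norm_neg]
    refine hsqr _ _ dist_nonneg ?_
    rw [hFnormsq, hge y hy, dist_comm]
  · subst hy
    rw [hfx₀, hfne x hx, sub_zero]
    refine hsqr _ _ dist_nonneg ?_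
    rw [hFnormsq, hge x hx]
  · rw [hfne x hx, hfne y hy]
    refine hsqr _ _ dist_nonneg ?_
    rw [hFdistsq, hge x hx, hge y hy]

noncomputable def discMetric (m : ℕ) : MetricSpace (Fin m) where
  dist x y := if x = y then 0 else 1
  dist_self x := show (if x = x then (0:ℝ) else 1) = 0 from if_pos rfl
  dist_comm x y := by
    show (if x = y then (0:ℝ) else 1) = (if y = x then (0:ℝ) else 1)
    by_cases h : x = y
    · rw [if_pos h, if_pos h.symm]
    · rw [if_neg h, if_neg (Ne.symm h)]
  dist_triangle x y z := by
    show (if x = z then (0:ℝ) else 1) ≤ (if x = y then (0:ℝ) else 1) + (if y = z then (0:ℝ) else 1)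
    by_cases hxz : x = z
    · rw [if_pos hxz]
      have h1 : (0:ℝ) ≤ if x = y then 0 else 1 := by positivity
      have h2 : (0:ℝ) ≤ if y = z then 0 else 1 := by positivity
      linarith
    · rw [if_neg hxz]
      by_cases hxy : x = y
      · rw [if_pos hxy, if_neg (hxy ▸ hxz)]
        norm_num
      · rw [if_neg hxy]
        have h2 : (0:ℝ) ≤ if y = z then 0 else 1 := by positivity
        linarith
  eq_of_dist_eq_zero := by
    intro x y h
    replace h : (if x = y then (0:ℝ) else 1) = 0 := h
    by_contra hne
    rw [if_neg hne] at h
    exact one_ne_zero h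

lemma part2 (n : ℕ) (hn : 1 ≤ n) (k : ℕ) (hk : k < n)
    (f : Fin (n + 1) → EuclideanSpace ℝ (Fin k))
    (hf : ∀ x y : Fin (n + 1), ‖f x - f y‖ = @dist _ (discMetric (n + 1)).toDist x y) :
    False := by
  letI : MetricSpace (Fin (n + 1)) := discMetric (n + 1)
  have hdist : ∀ x y : Fin (n + 1), x ≠ y → ‖f x - f y‖ = 1 := by
    intro x y hxy
    rw [hf x y]
    exact if_neg hxy
  set u : Fin n → EuclideanSpace ℝ (Fin k) := fun i => f i.succ - f 0 with hu
  have hnorm : ∀ i, ‖u i‖ = 1 := fun i => hdist _ _ (Fin.succ_ne_zero i)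
  have hinner : ∀ i j, i ≠ j → inner ℝ (u i) (u j) = (1/2 : ℝ) := by
    intro i j hij
    have hsub : u i - u j = f i.succ - f j.succ := by simp only [hu]; abel
    have h1 : ‖u i - u j‖ = 1 := by
      rw [hsub]; exact hdist _ _ (fun h => hij (Fin.succ_injective n h))
    have h2 := norm_sub_sq_real (u i) (u j)
    rw [h1, hnorm i, hnorm j] at h2
    simp only [one_pow] at h2
    linarith
  have hinner_self : ∀ i, inner ℝ (u i) (u i) = (1:ℝ) := by
    intro i
    rw [real_inner_self_eq_norm_sq, hnorm i]; norm_num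
  have hli : LinearIndependent ℝ u := by
    rw [Fintype.linearIndependent_iff]
    intro c hc
    set S := ∑ i : Fin n, c i with hS
    have hcj : ∀ j, c j = -S := by
      intro j
      have h0 : inner ℝ (∑ i : Fin n, c i • u i) (u j) = (0:ℝ) := by
        rw [hc, inner_zero_left]
      rw [sum_inner] at h0
      have hterm : ∀ i, inner ℝ (c i • u i) (u j)
          = c i / 2 + (if i = j then c i / 2 else 0) := by
        intro i
        rw [real_inner_smul_left]
        by_cases h : i = j
        · subst h; rw [hinner_self, if_pos rfl]; ring
        · rw [hinner i j h, if_neg h]; ring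
      rw [Finset.sum_congr rfl (fun i _ => hterm i), Finset.sum_add_distrib,
        Finset.sum_ite_eq' Finset.univ j (fun i => c i / 2)] at h0
      simp only [Finset.mem_univ, if_true] at h0
      have hsum : (∑ i : Fin n, c i / 2) = S / 2 := by
        rw [hS, Finset.sum_div]
      rw [hsum] at h0
      linarith
    have hS0 : S = 0 := by
      have h1 : S = ∑ i : Fin n, (-S) := by
        rw [hS]; exact Finset.sum_congr rfl fun i _ => hcj i
      rw [Finset.sum_const, Finset.card_univ, Fintype.card_fin] at h1
      have h2 : S + (n:ℝ) * S = 0 := by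
        rw [nsmul_eq_mul] at h1
        linarith
      have h3 : ((n:ℝ) + 1) * S = 0 := by linarith
      have h4 : ((n:ℝ) + 1) ≠ 0 := by positivity
      exact (mul_eq_zero.mp h3).resolve_left h4
    intro i
    rw [hcj i, hS0, neg_zero]
  have hcard := hli.fintype_card_le_finrank
  rw [Fintype.card_fin, finrank_euclideanSpace_fin] at hcard
  omega



/-- Lemin–Lemin: for `n ≥ 1`, (1) every ultrametric space with exactly `n + 1` points
embeds isometrically into the `n`-dimensional Euclidean space `ℝⁿ`, and (2) there is
an ultrametric space with `n + 1` points admitting no isometric embedding into `ℝᵏ`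
for any `k < n`. -/
theorem ultrametric_finite_isometric_embedding (n : ℕ) (hn : 1 ≤ n) :
    (∀ (X : Type) [MetricSpace X],
        (∀ x y z : X, dist x z ≤ max (dist x y) (dist y z)) →
        Nat.card X = n + 1 →
        ∃ f : X → EuclideanSpace ℝ (Fin n), ∀ x y : X, ‖f x - f y‖ = dist x y) ∧
    (∃ (X : Type) (_ : MetricSpace X),
        (∀ x y z : X, dist x z ≤ max (dist x y) (dist y z)) ∧
        Nat.card X = n + 1 ∧
        ∀ k : ℕ, k < n →
          ¬ ∃ f : X → EuclideanSpace ℝ (Fin k), ∀ x y : X, ‖f x - f y‖ = dist x y) := by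
  constructor
  · intro X _ hu hcard
    exact part1 n X hu hcard
  · refine ⟨Fin (n + 1), discMetric (n + 1), ?_, ?_, ?_⟩
    · intro x y z
      show (if x = z then (0:ℝ) else 1)
          ≤ max (if x = y then (0:ℝ) else 1) (if y = z then (0:ℝ) else 1)
      by_cases hxz : x = z
      · rw [if_pos hxz]
        rcases le_max_iff (a := if x = y then (0:ℝ) else 1) (b := if y = z then (0:ℝ) else 1)
          with h
        by_cases hxy : x = y
        · refine le_max_of_le_left ?_; rw [if_pos hxy]
        · refine le_max_of_le_left ?_; rw [if_neg hxy]; norm_num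
      · rw [if_neg hxz]
        by_cases hxy : x = y
        · refine le_max_of_le_right ?_
          have : ¬ y = z := fun h => hxz (hxy.trans h)
          rw [if_neg this]
        · refine le_max_of_le_left ?_
          rw [if_neg hxy]
    · rw [Nat.card_eq_fintype_card, Fintype.card_fin]
    · rintro k hk ⟨f, hf⟩
      exact part2 n hn k hk f hf
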